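/- (Constraints on the pairwise scale-based invariants of a 3-COS.) Let s > 0, R ∈ SO(3), t ∈ ℝ³, and let P_i, P_j, P_k ∈ ℝ³ be pairwise distinct with Q_m = s·R·P_m + t + ε_m for m ∈ {i, j, k}. Suppose A ≥ 0 is a noise bound with ‖ε_m‖ ≤ A/2 for each m. Then the scale-based invariants I^s_{ij} = ‖Q_i − Q_j‖/‖P_i − P_j‖ and I^s_{jk} = ‖Q_j − Q_k‖/‖P_j − P_k‖ satisfy | I^s_{ij} − I^s_{jk} | ≤ A·(1/‖P_i − P_j‖ + 1/‖P_j − P_k‖). -/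

import Mathlib

/-- The special orthogonal group SO(3): real 3×3 matrices `R` with `Rᵀ * R = 1` and `det R = 1`. -/
def SO3 (R : Matrix (Fin 3) (Fin 3) ℝ) : Prop :=
  R.transpose * R = 1 ∧ R.det = 1

/-- Action of a 3×3 matrix on ℝ³ (with Euclidean norm) by matrix–vector multiplication. -/
noncomputable def rotAct (R : Matrix (Fin 3) (Fin 3) ℝ) (v : EuclideanSpace ℝ (Fin 3)) :
    EuclideanSpace ℝ (Fin 3) :=
  Matrix.toEuclideanLin R v

lemma rotAct_norm (R : Matrix (Fin 3) (Fin 3) ℝ) (hR : R.transpose * R = 1)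
    (v : EuclideanSpace ℝ (Fin 3)) : ‖rotAct R v‖ = ‖v‖ := by
  have h : (inner ℝ (rotAct R v) (rotAct R v) : ℝ) = inner ℝ v v := by
    have hct : R.conjTranspose = R.transpose := by
      ext i j; simp [Matrix.conjTranspose_apply]
    have := LinearMap.adjoint_inner_right (Matrix.toEuclideanLin R) v (Matrix.toEuclideanLin R v)
    rw [← Matrix.toEuclideanLin_conjTranspose_eq_adjoint, hct] at this
    rw [rotAct, ← this]
    congr 1
    simp [Matrix.toEuclideanLin_apply, Matrix.mulVec_mulVec, hR]
  have h1 := real_inner_self_eq_norm_sq (rotAct R v)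
  have h2 := real_inner_self_eq_norm_sq v
  nlinarith [norm_nonneg (rotAct R v), norm_nonneg v]

lemma rotAct_sub (R : Matrix (Fin 3) (Fin 3) ℝ) (u v : EuclideanSpace ℝ (Fin 3)) :
    rotAct R u - rotAct R v = rotAct R (u - v) := by
  simp [rotAct]

/-- Constraints on the pairwise scale-based invariants of a 3-COS. -/
theorem stmt10 (s : ℝ) (hs : 0 < s) (R : Matrix (Fin 3) (Fin 3) ℝ) (hR : SO3 R)
    (t Pi Pj Pk Qi Qj Qk εi εj εk : EuclideanSpace ℝ (Fin 3))
    (hij : Pi ≠ Pj) (hjk : Pj ≠ Pk) (hik : Pi ≠ Pk)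
    (hQi : Qi = s • rotAct R Pi + t + εi)
    (hQj : Qj = s • rotAct R Pj + t + εj)
    (hQk : Qk = s • rotAct R Pk + t + εk)
    (A : ℝ) (hA : 0 ≤ A)
    (hεi : ‖εi‖ ≤ A / 2) (hεj : ‖εj‖ ≤ A / 2) (hεk : ‖εk‖ ≤ A / 2) :
    |‖Qi - Qj‖ / ‖Pi - Pj‖ - ‖Qj - Qk‖ / ‖Pj - Pk‖| ≤
      A * (1 / ‖Pi - Pj‖ + 1 / ‖Pj - Pk‖) := by
  have key : ∀ (Qa Qb Pa Pb εa εb : EuclideanSpace ℝ (Fin 3)),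
      Qa = s • rotAct R Pa + t + εa → Qb = s • rotAct R Pb + t + εb →
      ‖εa‖ ≤ A / 2 → ‖εb‖ ≤ A / 2 →
      |‖Qa - Qb‖ - s * ‖Pa - Pb‖| ≤ A := by
    intro Qa Qb Pa Pb εa εb ha hb hεa hεb
    have hsub : Qa - Qb - s • rotAct R (Pa - Pb) = εa - εb := by
      rw [ha, hb, ← rotAct_sub, smul_sub]
      abel
    have hnorm : ‖s • rotAct R (Pa - Pb)‖ = s * ‖Pa - Pb‖ := by
      rw [norm_smul, rotAct_norm R hR.1, Real.norm_eq_abs, abs_of_pos hs]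
    calc |‖Qa - Qb‖ - s * ‖Pa - Pb‖| = |‖Qa - Qb‖ - ‖s • rotAct R (Pa - Pb)‖| := by
          rw [hnorm]
      _ ≤ ‖Qa - Qb - s • rotAct R (Pa - Pb)‖ := abs_norm_sub_norm_le _ _
      _ = ‖εa - εb‖ := by rw [hsub]
      _ ≤ ‖εa‖ + ‖εb‖ := norm_sub_le _ _
      _ ≤ A := by linarith
  have h1 := key Qi Qj Pi Pj εi εj hQi hQj hεi hεj
  have h2 := key Qj Qk Pj Pk εj εk hQj hQk hεj hεk
  have d1 : 0 < ‖Pi - Pj‖ := by simpa [sub_eq_zero] using hij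
  have d2 : 0 < ‖Pj - Pk‖ := by simpa [sub_eq_zero] using hjk
  have e1 : |‖Qi - Qj‖ / ‖Pi - Pj‖ - s| ≤ A * (1 / ‖Pi - Pj‖) := by
    have : ‖Qi - Qj‖ / ‖Pi - Pj‖ - s = (‖Qi - Qj‖ - s * ‖Pi - Pj‖) / ‖Pi - Pj‖ := by
      field_simp
    rw [this, abs_div, abs_of_pos d1, mul_one_div]
    gcongr
  have e2 : |‖Qj - Qk‖ / ‖Pj - Pk‖ - s| ≤ A * (1 / ‖Pj - Pk‖) := by
    have : ‖Qj - Qk‖ / ‖Pj - Pk‖ - s = (‖Qj - Qk‖ - s * ‖Pj - Pk‖) / ‖Pj - Pk‖ := by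
      field_simp
    rw [this, abs_div, abs_of_pos d2, mul_one_div]
    gcongr
  calc |‖Qi - Qj‖ / ‖Pi - Pj‖ - ‖Qj - Qk‖ / ‖Pj - Pk‖|
      ≤ |‖Qi - Qj‖ / ‖Pi - Pj‖ - s| + |‖Qj - Qk‖ / ‖Pj - Pk‖ - s| := by
        rw [abs_sub_comm (‖Qj - Qk‖ / ‖Pj - Pk‖) s]
        exact abs_sub_le _ _ _
    _ ≤ A * (1 / ‖Pi - Pj‖) + A * (1 / ‖Pj - Pk‖) := add_le_add e1 e2
    _ = A * (1 / ‖Pi - Pj‖ + 1 / ‖Pj - Pk‖) := by ring
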